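/- Suppose v(x) > 0 for all x ∈ [0,Q). Then in the bidpoint-constrained auctions with M bid points, minimax loss in the uniform-price auction is strictly lower than in the pay-as-bid auction: min over M-point bids of L^LAB < min over M-point bids of L^PAB. -/

import Mathlib

open MeasureTheory intervalIntegral

noncomputable section

/-- Positive part `(x)₊ = max(x,0)`. -/
def pos (x : ℝ) : ℝ := max x 0

/-- An `M`-point bid `(q,b)`: `0 = q_0 ≤ q_1 ≤ … ≤ q_M ≤ Q` and `b_1 ≥ … ≥ b_M ≥ 0`. -/
def IsBidPts (Q : ℝ) (M : ℕ) (q b : ℕ → ℝ) : Prop :=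
  q 0 = 0 ∧ (∀ k, k < M → q k ≤ q (k + 1)) ∧ q M ≤ Q ∧
    (∀ k, 1 ≤ k → k < M → b (k + 1) ≤ b k) ∧ 0 ≤ b M

/-- The step bid function induced by the `M`-point bid `(q,b)`:
`b̂(x) = b_k` for `q_{k−1} ≤ x < q_k` and `b̂(x) = 0` for `x ≥ q_M`. -/
def bhat (M : ℕ) (q b : ℕ → ℝ) (x : ℝ) : ℝ :=
  ∑ k ∈ Finset.Icc 1 M, if q (k - 1) ≤ x ∧ x < q k then b k else 0

/-- Conditional regret at quantity `t` in the bidpoint-constrained pay-as-bid auction: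
`R^PAB_t(q,b) = ∫_0^t (b̂(x) − b̂(t)) dx + ∫_t^Q (v(x) − b̂(t))₊ dx`. -/
def Rcpab (Q : ℝ) (M : ℕ) (v : ℝ → ℝ) (q b : ℕ → ℝ) (t : ℝ) : ℝ :=
  (∫ x in (0:ℝ)..t, (bhat M q b x - bhat M q b t))
    + ∫ x in t..Q, pos (v x - bhat M q b t)

/-- Loss in the bidpoint-constrained pay-as-bid auction:
`L^PAB(q,b) = sup_{t ∈ [0,Q]} R^PAB_t(q,b)`. -/
def Lcpab (Q : ℝ) (M : ℕ) (v : ℝ → ℝ) (q b : ℕ → ℝ) : ℝ :=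
  sSup {r : ℝ | ∃ t ∈ Set.Icc (0:ℝ) Q, r = Rcpab Q M v q b t}

/-- A minimax-loss `M`-point bid in the constrained pay-as-bid auction. -/
def IsMinimaxCPAB (Q : ℝ) (M : ℕ) (v : ℝ → ℝ) (q b : ℕ → ℝ) : Prop :=
  IsBidPts Q M q b ∧ ∀ q' b', IsBidPts Q M q' b' → Lcpab Q M v q b ≤ Lcpab Q M v q' b'

/-- Loss in the bidpoint-constrained uniform-price auction:
`L^LAB(q,b) = max( max_{1≤k≤M} max( q_k·b_k , ∫_{q_{k−1}}^Q (v(x) − b_k)₊ dx ) , ∫_{q_M}^Q v )`. -/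
def Lclab (Q : ℝ) (M : ℕ) (hM : 1 ≤ M) (v : ℝ → ℝ) (q b : ℕ → ℝ) : ℝ :=
  max ((Finset.Icc 1 M).sup' (Finset.nonempty_Icc.mpr hM)
        (fun k => max (q k * b k) (∫ x in q (k - 1)..Q, pos (v x - b k))))
      (∫ x in q M..Q, v x)

/-- A minimax-loss `M`-point bid in the constrained uniform-price auction. -/
def IsMinimaxCLAB (Q : ℝ) (M : ℕ) (hM : 1 ≤ M) (v : ℝ → ℝ) (q b : ℕ → ℝ) : Prop :=
  IsBidPts Q M q b ∧
    ∀ q' b', IsBidPts Q M q' b' → Lclab Q M hM v q b ≤ Lclab Q M hM v q' b'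

/-- The marginal value function: weakly decreasing, nonnegative and integrable on `[0,Q]`. -/
def IsValueFn (Q : ℝ) (v : ℝ → ℝ) : Prop :=
  AntitoneOn v (Set.Icc 0 Q) ∧ (∀ x ∈ Set.Icc (0:ℝ) Q, 0 ≤ v x) ∧
    IntervalIntegrable v volume 0 Q

namespace KW


lemma pos_nonneg (x : ℝ) : 0 ≤ pos x := le_max_right _ _
lemma le_pos (x : ℝ) : x ≤ pos x := le_max_left _ _
lemma pos_mono {x y : ℝ} (h : x ≤ y) : pos x ≤ pos y := max_le_max h le_rfl
lemma pos_le {x c : ℝ} (h : x ≤ c) (hc : 0 ≤ c) : pos x ≤ c := max_le h hc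
lemma pos_sub_min (a c : ℝ) : pos (a - c) = a - min a c := by
  rcases le_total a c with h | h
  · simp [pos, max_eq_right (sub_nonpos.mpr h), min_eq_left h]
  · simp [pos, max_eq_left (sub_nonneg.mpr h), min_eq_right h]
lemma pos_eq_half (x : ℝ) : pos x = (x + |x|) / 2 := by
  rcases le_total x 0 with h | h
  · rw [abs_of_nonpos h]; simp [pos, max_eq_right h]
  · rw [abs_of_nonneg h]; simp only [pos, max_eq_left h]; ring

lemma II.pos_comp {f : ℝ → ℝ} {a b : ℝ} (hf : IntervalIntegrable f volume a b) :
    IntervalIntegrable (fun x => pos (f x)) volume a b := by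
  have : (fun x => pos (f x)) = fun x => (f x + |f x|) / 2 := funext fun x => pos_eq_half (f x)
  rw [this]
  exact (hf.add hf.abs).div_const 2

lemma II.min_const {f : ℝ → ℝ} {a b c : ℝ} (hf : IntervalIntegrable f volume a b) :
    IntervalIntegrable (fun x => min (f x) c) volume a b := by
  have : (fun x => min (f x) c) = fun x => (f x + c - |f x - c|) / 2 := by
    funext x
    rcases le_total (f x) c with h | h
    · rw [min_eq_left h, abs_of_nonpos (sub_nonpos.mpr h)]; ring
    · rw [min_eq_right h, abs_of_nonneg (sub_nonneg.mpr h)]; ring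
  rw [this]
  exact (((hf.add (intervalIntegrable_const)).sub (hf.sub intervalIntegrable_const).abs)).div_const 2

/-- Monotonicity of interval integrals from pointwise comparison on `Ico`. -/
lemma integral_mono_Ico {f g : ℝ → ℝ} {a b : ℝ} (hab : a ≤ b)
    (hf : IntervalIntegrable f volume a b) (hg : IntervalIntegrable g volume a b)
    (h : ∀ x ∈ Set.Ico a b, f x ≤ g x) :
    ∫ x in a..b, f x ≤ ∫ x in a..b, g x := by
  rw [intervalIntegral.integral_of_le hab, intervalIntegral.integral_of_le hab]
  have hf' : IntegrableOn f (Set.Ioc a b) volume :=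
    (intervalIntegrable_iff_integrableOn_Ioc_of_le hab).mp hf
  have hg' : IntegrableOn g (Set.Ioc a b) volume :=
    (intervalIntegrable_iff_integrableOn_Ioc_of_le hab).mp hg
  refine MeasureTheory.setIntegral_mono_on_ae hf' hg' measurableSet_Ioc ?_
  have hb0 : (volume : Measure ℝ) {b} = 0 := measure_singleton b
  filter_upwards [measure_eq_zero_iff_ae_notMem.mp hb0] with x hx hxm
  exact h x ⟨hxm.1.le, lt_of_le_of_ne hxm.2 (by simpa using hx)⟩

lemma const_le_integral_Ico {f : ℝ → ℝ} {a b c : ℝ} (hab : a ≤ b)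
    (hf : IntervalIntegrable f volume a b) (h : ∀ x ∈ Set.Ico a b, c ≤ f x) :
    (b - a) * c ≤ ∫ x in a..b, f x := by
  have := integral_mono_Ico hab intervalIntegrable_const hf h
  simpa [intervalIntegral.integral_const, smul_eq_mul] using this

lemma integral_le_const_Ico {f : ℝ → ℝ} {a b c : ℝ} (hab : a ≤ b)
    (hf : IntervalIntegrable f volume a b) (h : ∀ x ∈ Set.Ico a b, f x ≤ c) :
    ∫ x in a..b, f x ≤ (b - a) * c := by
  have := integral_mono_Ico hab hf intervalIntegrable_const h
  simpa [intervalIntegral.integral_const, smul_eq_mul] using this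

lemma integral_nonneg_Ico {f : ℝ → ℝ} {a b : ℝ} (hab : a ≤ b)
    (hf : IntervalIntegrable f volume a b) (h : ∀ x ∈ Set.Ico a b, 0 ≤ f x) :
    0 ≤ ∫ x in a..b, f x := by
  have := const_le_integral_Ico hab hf h
  simpa using this

/-- translation comparison: `∫_t^{t+s} v ≤ ∫_0^s v` for antitone nonneg `v`. -/
lemma integral_shift_le {Q : ℝ} {v : ℝ → ℝ} (hva : AntitoneOn v (Set.Icc 0 Q))
    (hvi : IntervalIntegrable v volume 0 Q) {t s : ℝ} (ht : 0 ≤ t) (hs : 0 ≤ s)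
    (htsQ : t + s ≤ Q) :
    ∫ x in t..t + s, v x ≤ ∫ x in (0:ℝ)..s, v x := by
  have hsub : ∀ a b : ℝ, 0 ≤ a → b ≤ Q → a ≤ b → IntervalIntegrable v volume a b := by
    intro a b ha hb hab
    refine hvi.mono_set ?_
    rw [Set.uIcc_of_le hab, Set.uIcc_of_le (ha.trans (hab.trans hb))]
    exact Set.Icc_subset_Icc ha hb
  have h1 : (∫ x in t..t + s, v x) = ∫ x in (0:ℝ)..s, v (x + t) := by
    rw [intervalIntegral.integral_comp_add_right (fun y => v y) t]
    norm_num [add_comm]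
  rw [h1]
  have hsQ : s ≤ Q := by linarith
  refine integral_mono_Ico hs ?_ (hsub 0 s le_rfl hsQ hs) ?_
  · have := (hsub t (t + s) ht htsQ (by linarith)).comp_add_right t
    simpa using this
  · intro x hx
    exact hva (Set.mem_Icc.mpr ⟨hx.1, by linarith [hx.2.le]⟩)
      (Set.mem_Icc.mpr ⟨by linarith [hx.1], by linarith [hx.2.le]⟩) (by linarith)


variable {Q : ℝ} {M : ℕ} {q b : ℕ → ℝ}

lemma q_mono (hbid : IsBidPts Q M q b) : ∀ i j : ℕ, i ≤ j → j ≤ M → q i ≤ q j := by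
  intro i j hij hjM
  induction j with
  | zero =>
    have : i = 0 := by omega
    subst this; exact le_rfl
  | succ n ih =>
    rcases Nat.lt_or_ge i (n + 1) with h | h
    · exact (ih (by omega) (by omega)).trans (hbid.2.1 n (by omega))
    · have : i = n + 1 := by omega
      subst this; exact le_rfl

lemma q_nonneg (hbid : IsBidPts Q M q b) {k : ℕ} (hk : k ≤ M) : 0 ≤ q k :=
  hbid.1 ▸ q_mono hbid 0 k (Nat.zero_le _) hk

lemma b_mono (hbid : IsBidPts Q M q b) : ∀ i j : ℕ, 1 ≤ i → i ≤ j → j ≤ M → b j ≤ b i := by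
  intro i j h1 hij hjM
  induction j with
  | zero => omega
  | succ n ih =>
    rcases Nat.lt_or_ge i (n + 1) with h | h
    · exact (hbid.2.2.2.1 n (by omega) (by omega)).trans (ih (by omega) (by omega))
    · have : i = n + 1 := by omega
      subst this; exact le_rfl

lemma b_nonneg (hbid : IsBidPts Q M q b) {k : ℕ} (h1 : 1 ≤ k) (hM : k ≤ M) : 0 ≤ b k :=
  hbid.2.2.2.2.trans (b_mono hbid k M h1 hM le_rfl)

lemma bhat_of_mem (hbid : IsBidPts Q M q b) {j : ℕ} {x : ℝ} (h1 : 1 ≤ j) (hM : j ≤ M)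
    (ha : q (j - 1) ≤ x) (hb : x < q j) : bhat M q b x = b j := by
  rw [bhat, Finset.sum_eq_single_of_mem j (Finset.mem_Icc.mpr ⟨h1, hM⟩)]
  · rw [if_pos ⟨ha, hb⟩]
  · intro k hk hkj
    rw [if_neg]
    rintro ⟨hka, hkb⟩
    rcases lt_or_gt_of_ne hkj with hlt | hgt
    · have : q k ≤ q (j - 1) := q_mono hbid k (j - 1) (by omega) (by omega)
      linarith
    · have hmem := Finset.mem_Icc.mp hk
      have : q j ≤ q (k - 1) := q_mono hbid j (k - 1) (by omega) (by omega)
      linarith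

lemma bhat_cases (hbid : IsBidPts Q M q b) (x : ℝ) :
    bhat M q b x = 0 ∨
      ∃ j, 1 ≤ j ∧ j ≤ M ∧ q (j - 1) ≤ x ∧ x < q j ∧ bhat M q b x = b j := by
  by_cases h : ∃ j ∈ Finset.Icc 1 M, q (j - 1) ≤ x ∧ x < q j
  · obtain ⟨j, hjmem, hj1, hj2⟩ := h
    have hq := Finset.mem_Icc.mp hjmem
    exact Or.inr ⟨j, hq.1, hq.2, hj1, hj2, bhat_of_mem hbid hq.1 hq.2 hj1 hj2⟩
  · left
    rw [bhat]
    refine Finset.sum_eq_zero fun k hk => ?_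
    rw [if_neg]
    exact fun hcon => h ⟨k, hk, hcon⟩

lemma bhat_nonneg (hbid : IsBidPts Q M q b) (x : ℝ) : 0 ≤ bhat M q b x := by
  refine Finset.sum_nonneg fun k hk => ?_
  have hm := Finset.mem_Icc.mp hk
  by_cases h : q (k - 1) ≤ x ∧ x < q k
  · rw [if_pos h]; exact b_nonneg hbid hm.1 hm.2
  · rw [if_neg h]

lemma bhat_ge (hbid : IsBidPts Q M q b) :
    ∀ k, 1 ≤ k → k ≤ M → ∀ x : ℝ, 0 ≤ x → x < q k → b k ≤ bhat M q b x := by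
  intro k
  induction k with
  | zero => omega
  | succ n ih =>
    intro h1 hM x hx hxq
    by_cases hc : q n ≤ x
    · have := bhat_of_mem hbid (j := n + 1) (by omega) hM (by simpa using hc) hxq
      rw [this]
    · push_neg at hc
      have hn1 : 1 ≤ n := by
        by_contra hcon
        have : n = 0 := by omega
        subst this
        rw [hbid.1] at hc; linarith
      exact (hbid.2.2.2.1 n hn1 (by omega)).trans (ih hn1 (by omega) x hx hc)

lemma bhat_anti (hbid : IsBidPts Q M q b) {x y : ℝ} (hx : 0 ≤ x) (hxy : x ≤ y) :
    bhat M q b y ≤ bhat M q b x := by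
  rcases bhat_cases hbid y with h0 | ⟨j, hj1, hjM, hja, hjb, hje⟩
  · rw [h0]; exact bhat_nonneg hbid x
  · rw [hje]
    by_cases hc : q (j - 1) ≤ x
    · rw [bhat_of_mem hbid hj1 hjM hc (lt_of_le_of_lt hxy hjb)]
    · push_neg at hc
      have hj2 : 2 ≤ j := by
        by_contra hcon
        have : j = 1 := by omega
        subst this
        simp only [Nat.sub_self] at hc
        rw [hbid.1] at hc; linarith
      have h1 : b j ≤ b (j - 1) := by
        have := hbid.2.2.2.1 (j - 1) (by omega) (by omega)
        have hj : j - 1 + 1 = j := by omega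
        rwa [hj] at this
      exact h1.trans (bhat_ge hbid (j - 1) (by omega) (by omega) x hx hc)

lemma bhat_zero_of_ge (hbid : IsBidPts Q M q b) {x : ℝ} (hx : q M ≤ x) : bhat M q b x = 0 := by
  rw [bhat]
  refine Finset.sum_eq_zero fun k hk => ?_
  have hm := Finset.mem_Icc.mp hk
  rw [if_neg]
  rintro ⟨-, h2⟩
  have : q k ≤ q M := q_mono hbid k M hm.2 le_rfl
  linarith

lemma bhat_le_b (hbid : IsBidPts Q M q b) {k : ℕ} (h1 : 1 ≤ k) (hM : k ≤ M) :
    bhat M q b (q (k - 1)) ≤ b k := by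
  rcases bhat_cases hbid (q (k - 1)) with h0 | ⟨j, hj1, hjM, hja, hjb, hje⟩
  · rw [h0]; exact b_nonneg hbid h1 hM
  · rw [hje]
    refine b_mono hbid k j h1 ?_ hjM
    by_contra hcon
    push_neg at hcon
    have : q j ≤ q (k - 1) := q_mono hbid j (k - 1) (by omega) (by omega)
    linarith

lemma bhat_int (q b : ℕ → ℝ) (a c : ℝ) :
    IntervalIntegrable (bhat M q b) volume a c := by
  have : bhat M q b = ∑ k ∈ Finset.Icc 1 M,
      (Set.Ico (q (k - 1)) (q k)).indicator fun _ => b k := by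
    funext x
    rw [bhat, Finset.sum_apply]
    refine Finset.sum_congr rfl fun k _ => ?_
    by_cases h : x ∈ Set.Ico (q (k - 1)) (q k)
    · rw [Set.indicator_of_mem h, if_pos (Set.mem_Ico.mp h)]
    · rw [Set.indicator_of_notMem h, if_neg (fun hc => h (Set.mem_Ico.mpr hc))]
  rw [this]
  refine IntervalIntegrable.sum _ fun i _ => ?_
  refine MeasureTheory.Integrable.intervalIntegrable ?_
  rw [MeasureTheory.integrable_indicator_iff measurableSet_Ico]
  refine (MeasureTheory.integrableOn_const_iff (C := b i)).mpr (Or.inr ?_)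
  exact measure_Ico_lt_top



variable {Q : ℝ} {v : ℝ → ℝ}

/-- integrability of `v` on subintervals of `[0,Q]`. -/
lemma vII (hvi : IntervalIntegrable v volume 0 Q) {a b : ℝ} (ha : 0 ≤ a) (hb : b ≤ Q)
    (hab : a ≤ b) : IntervalIntegrable v volume a b := by
  refine hvi.mono_set ?_
  rw [Set.uIcc_of_le hab, Set.uIcc_of_le (ha.trans (hab.trans hb))]
  exact Set.Icc_subset_Icc ha hb

lemma posII (hvi : IntervalIntegrable v volume 0 Q) {a b : ℝ} (ha : 0 ≤ a) (hb : b ≤ Q)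
    (hab : a ≤ b) (c : ℝ) :
    IntervalIntegrable (fun x => pos (v x - c)) volume a b :=
  II.pos_comp ((vII hvi ha hb hab).sub intervalIntegrable_const)

lemma Wf_nonneg (hv0 : ∀ x ∈ Set.Icc (0:ℝ) Q, 0 ≤ v x)
    (hvi : IntervalIntegrable v volume 0 Q) {t : ℝ} (ht : 0 ≤ t) (htQ : t ≤ Q) :
    0 ≤ ∫ x in t..Q, v x := by
  refine integral_nonneg_Ico htQ (vII hvi ht le_rfl htQ) fun x hx => ?_
  exact hv0 x ⟨ht.trans hx.1, hx.2.le⟩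

lemma Wf_split (hvi : IntervalIntegrable v volume 0 Q) {s t : ℝ} (hs : 0 ≤ s) (hst : s ≤ t)
    (htQ : t ≤ Q) :
    (∫ x in s..Q, v x) = (∫ x in s..t, v x) + ∫ x in t..Q, v x := by
  have h1 : IntervalIntegrable v volume s t := vII hvi hs htQ hst
  have h2 : IntervalIntegrable v volume t Q := vII hvi (hs.trans hst) le_rfl htQ
  exact (intervalIntegral.integral_add_adjacent_intervals h1 h2).symm

lemma Wf_anti (hv0 : ∀ x ∈ Set.Icc (0:ℝ) Q, 0 ≤ v x)
    (hvi : IntervalIntegrable v volume 0 Q) {s t : ℝ} (hs : 0 ≤ s) (hst : s ≤ t)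
    (htQ : t ≤ Q) : (∫ x in t..Q, v x) ≤ ∫ x in s..Q, v x := by
  rw [Wf_split hvi hs hst htQ]
  have : 0 ≤ ∫ x in s..t, v x := by
    refine integral_nonneg_Ico hst (vII hvi hs htQ hst) fun x hx => ?_
    exact hv0 x ⟨hs.trans hx.1, hx.2.le.trans htQ⟩
  linarith

lemma Gf_le_Wf (hv0 : ∀ x ∈ Set.Icc (0:ℝ) Q, 0 ≤ v x)
    (hvi : IntervalIntegrable v volume 0 Q) {t c : ℝ} (ht : 0 ≤ t) (htQ : t ≤ Q)
    (hc : 0 ≤ c) : (∫ x in t..Q, pos (v x - c)) ≤ ∫ x in t..Q, v x := by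
  refine integral_mono_Ico htQ (posII hvi ht le_rfl htQ c) (vII hvi ht le_rfl htQ)
    fun x hx => ?_
  exact pos_le (by linarith [hv0 x ⟨ht.trans hx.1, hx.2.le⟩])
    (hv0 x ⟨ht.trans hx.1, hx.2.le⟩)

lemma Gf_nonneg (hvi : IntervalIntegrable v volume 0 Q) {t c : ℝ} (ht : 0 ≤ t) (htQ : t ≤ Q) :
    0 ≤ ∫ x in t..Q, pos (v x - c) :=
  integral_nonneg_Ico htQ (posII hvi ht le_rfl htQ c) fun x _ => pos_nonneg _

/-- THE GAIN LEMMA: raising the bid level by `θ` either brings the tail regret below `κ/2`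
or decreases it by `δ₂ = lam * min θ (κ/(4Q))`. -/
lemma gain (hQ : 0 < Q) (hva : AntitoneOn v (Set.Icc 0 Q))
    (hv0 : ∀ x ∈ Set.Icc (0:ℝ) Q, 0 ≤ v x) (hvi : IntervalIntegrable v volume 0 Q)
    {κ lam θ : ℝ} (hκ : 0 < κ) (hlam_0 : 0 < lam) (hlam_Q : lam ≤ Q)
    (hlam_v : (∫ x in (0:ℝ)..lam, v x) ≤ κ / 4) (hθ : 0 < θ)
    {t β : ℝ} (ht0 : 0 ≤ t) (htQ : t ≤ Q) (hβ : 0 ≤ β) :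
    (∫ x in t..Q, pos (v x - (β + θ))) ≤
      max (κ / 2) ((∫ x in t..Q, pos (v x - β)) - lam * min θ (κ / (4 * Q))) := by
  have hκ4Q : 0 < κ / (4 * Q) := by positivity
  by_cases hcase : Q - t ≤ lam
  · -- short tail: everything is at most κ/2
    refine le_trans ?_ (le_max_left _ _)
    have h1 : (∫ x in t..Q, pos (v x - (β + θ))) ≤ ∫ x in t..Q, v x :=
      Gf_le_Wf hv0 hvi ht0 htQ (by linarith)
    have h2 : (∫ x in t..Q, v x) ≤ ∫ x in (0:ℝ)..(Q - t), v x := by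
      have := integral_shift_le hva hvi ht0 (by linarith : (0:ℝ) ≤ Q - t)
        (by linarith : t + (Q - t) ≤ Q)
      simpa using this
    have h3 : (∫ x in (0:ℝ)..(Q - t), v x) ≤ ∫ x in (0:ℝ)..lam, v x := by
      have hsplit : (∫ x in (0:ℝ)..lam, v x)
          = (∫ x in (0:ℝ)..(Q - t), v x) + ∫ x in (Q - t)..lam, v x :=
        (intervalIntegral.integral_add_adjacent_intervals
          (vII hvi le_rfl (by linarith) (by linarith))
          (vII hvi (by linarith) hlam_Q hcase)).symm
      have : 0 ≤ ∫ x in (Q - t)..lam, v x := by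
        refine integral_nonneg_Ico hcase (vII hvi (by linarith) hlam_Q hcase) fun x hx => ?_
        exact hv0 x ⟨by linarith [hx.1], by linarith [hx.2.le]⟩
      linarith
    linarith
  · push_neg at hcase
    set w := t + lam with hw
    have hwQ : w < Q := by simp only [hw]; linarith
    have htw : t ≤ w := by simp only [hw]; linarith
    have hw0 : 0 ≤ w := by simp only [hw]; linarith
    have hsplit : ∀ c : ℝ, (∫ x in t..Q, pos (v x - c))
        = (∫ x in t..w, pos (v x - c)) + ∫ x in w..Q, pos (v x - c) := fun c =>
      (intervalIntegral.integral_add_adjacent_intervals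
        ((posII hvi ht0 hwQ.le htw c))
        ((posII hvi hw0 le_rfl hwQ.le c))).symm
    have hheadv : (∫ x in t..w, v x) ≤ κ / 4 := by
      have := integral_shift_le hva hvi ht0 hlam_0.le (by linarith : t + lam ≤ Q)
      exact this.trans hlam_v
    by_cases hvw : v w ≤ β + κ / (4 * Q)
    · -- level already essentially above values: below κ/2
      refine le_trans ?_ (le_max_left _ _)
      rw [hsplit]
      have h1 : (∫ x in t..w, pos (v x - (β + θ))) ≤ ∫ x in t..w, v x := by
        refine integral_mono_Ico htw (posII hvi ht0 hwQ.le htw _)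
          (vII hvi ht0 hwQ.le htw) fun x hx => ?_
        have hx0 := hv0 x ⟨ht0.trans hx.1, by linarith [hx.2.le]⟩
        exact pos_le (by linarith) hx0
      have h2 : (∫ x in w..Q, pos (v x - (β + θ))) ≤ (Q - w) * (κ / (4 * Q)) := by
        refine integral_le_const_Ico hwQ.le (posII hvi hw0 le_rfl hwQ.le _) fun x hx => ?_
        have hvx : v x ≤ v w := hva ⟨hw0, hwQ.le⟩ ⟨hw0.trans hx.1, hx.2.le⟩ hx.1
        exact pos_le (by linarith) hκ4Q.le
      have h3 : (Q - w) * (κ / (4 * Q)) ≤ κ / 4 := by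
        have hQw : Q - w ≤ Q := by linarith
        calc (Q - w) * (κ / (4 * Q)) ≤ Q * (κ / (4 * Q)) :=
              mul_le_mul_of_nonneg_right hQw hκ4Q.le
          _ = κ / 4 := by field_simp
      linarith
    · -- genuine gain of δ₂ on [t,w]
      push_neg at hvw
      refine le_trans ?_ (le_max_right _ _)
      have key : lam * min θ (κ / (4 * Q)) ≤
          (∫ x in t..Q, pos (v x - β)) - ∫ x in t..Q, pos (v x - (β + θ)) := by
        have hdiff : (∫ x in t..Q, pos (v x - β)) - (∫ x in t..Q, pos (v x - (β + θ)))
            = ∫ x in t..Q, (pos (v x - β) - pos (v x - (β + θ))) := by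
          rw [intervalIntegral.integral_sub (posII hvi ht0 le_rfl htQ _)
            (posII hvi ht0 le_rfl htQ _)]
        rw [hdiff]
        have hsplit2 : (∫ x in t..Q, (pos (v x - β) - pos (v x - (β + θ))))
            = (∫ x in t..w, (pos (v x - β) - pos (v x - (β + θ))))
              + ∫ x in w..Q, (pos (v x - β) - pos (v x - (β + θ))) :=
          (intervalIntegral.integral_add_adjacent_intervals
            ((posII hvi ht0 hwQ.le htw _).sub (posII hvi ht0 hwQ.le htw _))
            ((posII hvi hw0 le_rfl hwQ.le _).sub (posII hvi hw0 le_rfl hwQ.le _))).symm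
        rw [hsplit2]
        have h1 : (w - t) * min θ (κ / (4 * Q)) ≤
            ∫ x in t..w, (pos (v x - β) - pos (v x - (β + θ))) := by
          refine const_le_integral_Ico htw
            ((posII hvi ht0 hwQ.le htw _).sub (posII hvi ht0 hwQ.le htw _)) fun x hx => ?_
          have hvx : v w ≤ v x := hva ⟨ht0.trans hx.1, by linarith [hx.2.le]⟩
            ⟨hw0, hwQ.le⟩ hx.2.le
          have ha : κ / (4 * Q) ≤ v x - β := by linarith
          have hb : (0:ℝ) ≤ v x - β := by linarith
          rw [show pos (v x - β) = v x - β from max_eq_left hb]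
          rcases le_total (v x - β - θ) 0 with hc | hc
          · rw [show pos (v x - (β + θ)) = 0 from max_eq_right (by linarith)]
            have : θ ≥ v x - β - 0 := by linarith
            have hmin : min θ (κ / (4 * Q)) ≤ κ / (4 * Q) := min_le_right _ _
            linarith
          · rw [show pos (v x - (β + θ)) = v x - (β + θ) from max_eq_left (by linarith)]
            have hmin : min θ (κ / (4 * Q)) ≤ θ := min_le_left _ _
            linarith
        have h2 : 0 ≤ ∫ x in w..Q, (pos (v x - β) - pos (v x - (β + θ))) := by
          refine integral_nonneg_Ico hwQ.le
            ((posII hvi hw0 le_rfl hwQ.le _).sub (posII hvi hw0 le_rfl hwQ.le _)) fun x hx => ?_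
          have : pos (v x - (β + θ)) ≤ pos (v x - β) := pos_mono (by linarith)
          linarith
        have hwt : w - t = lam := by simp [hw]
        rw [hwt] at h1
        linarith
      linarith


------------------------------------------------------------------ PAB facts

section PAB

variable {Q : ℝ} {M : ℕ} {v : ℝ → ℝ} {q b : ℕ → ℝ}

lemma Rcpab_le (hv0 : ∀ x ∈ Set.Icc (0:ℝ) Q, 0 ≤ v x)
    (hvi : IntervalIntegrable v volume 0 Q) (hbid : IsBidPts Q M q b)
    {t : ℝ} (ht : t ∈ Set.Icc (0:ℝ) Q) :
    Rcpab Q M v q b t ≤ (∫ y in (0:ℝ)..Q, bhat M q b y) + ∫ x in (0:ℝ)..Q, v x := by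
  obtain ⟨ht0, htQ⟩ := ht
  have hc0 : 0 ≤ bhat M q b t := bhat_nonneg hbid t
  have i1 : (∫ x in (0:ℝ)..t, (bhat M q b x - bhat M q b t))
      ≤ ∫ x in (0:ℝ)..t, bhat M q b x := by
    refine integral_mono_Ico ht0 ((bhat_int q b 0 t).sub intervalIntegrable_const)
      (bhat_int q b 0 t) fun x _ => by linarith
  have i2 : (∫ x in (0:ℝ)..t, bhat M q b x) ≤ ∫ y in (0:ℝ)..Q, bhat M q b y := by
    have hsplit : (∫ y in (0:ℝ)..Q, bhat M q b y)
        = (∫ y in (0:ℝ)..t, bhat M q b y) + ∫ y in t..Q, bhat M q b y :=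
      (intervalIntegral.integral_add_adjacent_intervals (bhat_int q b 0 t)
        (bhat_int q b t Q)).symm
    have hnn : 0 ≤ ∫ y in t..Q, bhat M q b y :=
      integral_nonneg_Ico htQ (bhat_int q b t Q) fun y _ => bhat_nonneg hbid y
    linarith
  have i3 : (∫ x in t..Q, pos (v x - bhat M q b t)) ≤ ∫ x in t..Q, v x :=
    Gf_le_Wf hv0 hvi ht0 htQ hc0
  have i4 : (∫ x in t..Q, v x) ≤ ∫ x in (0:ℝ)..Q, v x :=
    Wf_anti hv0 hvi le_rfl ht0 htQ
  rw [Rcpab]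
  linarith

lemma R_le_L (hv0 : ∀ x ∈ Set.Icc (0:ℝ) Q, 0 ≤ v x)
    (hvi : IntervalIntegrable v volume 0 Q) (hbid : IsBidPts Q M q b)
    {t : ℝ} (ht : t ∈ Set.Icc (0:ℝ) Q) :
    Rcpab Q M v q b t ≤ Lcpab Q M v q b := by
  refine le_csSup ⟨(∫ y in (0:ℝ)..Q, bhat M q b y) + ∫ x in (0:ℝ)..Q, v x, ?_⟩ ⟨t, ht, rfl⟩
  rintro r ⟨t', ht', rfl⟩
  exact Rcpab_le hv0 hvi hbid ht'

lemma fact_P2 (hv0 : ∀ x ∈ Set.Icc (0:ℝ) Q, 0 ≤ v x)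
    (hvi : IntervalIntegrable v volume 0 Q) (hbid : IsBidPts Q M q b)
    {x : ℝ} (hx0 : 0 ≤ x) (hxQ : x ≤ Q) :
    (∫ y in (0:ℝ)..x, bhat M q b y) + (∫ y in x..Q, v y) - Q * bhat M q b x
      ≤ Lcpab Q M v q b := by
  refine le_trans ?_ (R_le_L hv0 hvi hbid ⟨hx0, hxQ⟩)
  rw [Rcpab]
  have e1 : (∫ y in (0:ℝ)..x, (bhat M q b y - bhat M q b x))
      = (∫ y in (0:ℝ)..x, bhat M q b y) - x * bhat M q b x := by
    rw [intervalIntegral.integral_sub (bhat_int q b 0 x) intervalIntegrable_const,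
      intervalIntegral.integral_const, smul_eq_mul]
    ring
  have i2 : (∫ y in x..Q, (v y - bhat M q b x)) ≤ ∫ y in x..Q, pos (v y - bhat M q b x) := by
    refine integral_mono_Ico hxQ ((vII hvi hx0 le_rfl hxQ).sub intervalIntegrable_const)
      (posII hvi hx0 le_rfl hxQ _) fun y _ => le_pos _
  have e2 : (∫ y in x..Q, (v y - bhat M q b x))
      = (∫ y in x..Q, v y) - (Q - x) * bhat M q b x := by
    rw [intervalIntegral.integral_sub (vII hvi hx0 le_rfl hxQ) intervalIntegrable_const,
      intervalIntegral.integral_const, smul_eq_mul]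
  rw [e1]
  rw [e2] at i2
  linarith

lemma fact_P1 (hv0 : ∀ x ∈ Set.Icc (0:ℝ) Q, 0 ≤ v x)
    (hvi : IntervalIntegrable v volume 0 Q) (hbid : IsBidPts Q M q b)
    {k : ℕ} (h1 : 1 ≤ k) (hkM : k ≤ M) :
    (∫ x in q (k-1)..Q, pos (v x - b k)) ≤ Lcpab Q M v q b := by
  have hq0 : 0 ≤ q (k-1) := q_nonneg hbid (by omega)
  have hqQ : q (k-1) ≤ Q := (q_mono hbid (k-1) M (by omega) le_rfl).trans hbid.2.2.1
  refine le_trans ?_ (R_le_L hv0 hvi hbid ⟨hq0, hqQ⟩)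
  rw [Rcpab]
  have hA : 0 ≤ ∫ x in (0:ℝ)..q (k-1), (bhat M q b x - bhat M q b (q (k-1))) := by
    refine integral_nonneg_Ico hq0 ((bhat_int q b 0 (q (k-1))).sub intervalIntegrable_const)
      fun x hx => sub_nonneg.mpr (bhat_anti hbid hx.1 hx.2.le)
  have hB : (∫ x in q (k-1)..Q, pos (v x - b k))
      ≤ ∫ x in q (k-1)..Q, pos (v x - bhat M q b (q (k-1))) := by
    refine integral_mono_Ico hqQ (posII hvi hq0 le_rfl hqQ _) (posII hvi hq0 le_rfl hqQ _)
      fun x _ => pos_mono ?_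
    have := bhat_le_b hbid h1 hkM
    linarith
  linarith

lemma Pf_mul_le (hbid : IsBidPts Q M q b) {k : ℕ} {u : ℝ} (h1 : 1 ≤ k) (hkM : k ≤ M)
    (hu0 : 0 ≤ u) (huq : u ≤ q k) :
    u * b k ≤ ∫ y in (0:ℝ)..u, bhat M q b y := by
  have := const_le_integral_Ico hu0 (bhat_int q b 0 u)
    (fun x hx => bhat_ge hbid k h1 hkM x hx.1 (lt_of_lt_of_le hx.2 huq))
  simpa using this

lemma Pf_split (hbid : IsBidPts Q M q b) {u x : ℝ} :
    (∫ y in (0:ℝ)..x, bhat M q b y)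
      = (∫ y in (0:ℝ)..u, bhat M q b y) + ∫ y in u..x, bhat M q b y :=
  (intervalIntegral.integral_add_adjacent_intervals (bhat_int q b 0 u)
    (bhat_int q b u x)).symm

lemma Pf_band (hbid : IsBidPts Q M q b) {u x : ℝ} (hu0 : 0 ≤ u) (hux : u ≤ x) :
    (x - u) * bhat M q b x
      ≤ (∫ y in (0:ℝ)..x, bhat M q b y) - ∫ y in (0:ℝ)..u, bhat M q b y := by
  have hsplit := Pf_split (u := u) (x := x) hbid
  have := const_le_integral_Ico hux (bhat_int q b u x)
    (fun y hy => bhat_anti hbid (hu0.trans hy.1) hy.2.le)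
  linarith

lemma Pf_mono (hbid : IsBidPts Q M q b) {u x : ℝ} (hu0 : 0 ≤ u) (hux : u ≤ x) :
    (∫ y in (0:ℝ)..u, bhat M q b y) ≤ ∫ y in (0:ℝ)..x, bhat M q b y := by
  have hsplit := Pf_split (u := u) (x := x) hbid
  have hnn : 0 ≤ ∫ y in u..x, bhat M q b y :=
    integral_nonneg_Ico hux (bhat_int q b u x) fun y _ => bhat_nonneg hbid y
  linarith

lemma Pf_nonneg (hbid : IsBidPts Q M q b) {x : ℝ} (hx : 0 ≤ x) :
    0 ≤ ∫ y in (0:ℝ)..x, bhat M q b y :=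
  integral_nonneg_Ico hx (bhat_int q b 0 x) fun y _ => bhat_nonneg hbid y

lemma P_eq_PqM (hbid : IsBidPts Q M q b) :
    (∫ y in (0:ℝ)..Q, bhat M q b y) = ∫ y in (0:ℝ)..q M, bhat M q b y := by
  have hsplit := Pf_split (u := q M) (x := Q) hbid
  have hzero : (∫ y in q M..Q, bhat M q b y) = 0 := by
    have : Set.EqOn (bhat M q b) (fun _ => 0) (Set.uIcc (q M) Q) := by
      intro y hy
      rw [Set.uIcc_of_le hbid.2.2.1] at hy
      exact bhat_zero_of_ge hbid hy.1
    rw [intervalIntegral.integral_congr this]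
    simp
  linarith

lemma P_le_L (hv0 : ∀ x ∈ Set.Icc (0:ℝ) Q, 0 ≤ v x) (hQ0 : 0 ≤ Q)
    (hvi : IntervalIntegrable v volume 0 Q) (hbid : IsBidPts Q M q b) :
    (∫ y in (0:ℝ)..Q, bhat M q b y) ≤ Lcpab Q M v q b := by
  have := fact_P2 hv0 hvi hbid (x := Q) hQ0 le_rfl
  rw [bhat_zero_of_ge hbid hbid.2.2.1] at this
  simpa using this

lemma L_nonneg (hv0 : ∀ x ∈ Set.Icc (0:ℝ) Q, 0 ≤ v x) (hQ0 : 0 ≤ Q)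
    (hvi : IntervalIntegrable v volume 0 Q) (hbid : IsBidPts Q M q b) :
    0 ≤ Lcpab Q M v q b :=
  (Pf_nonneg hbid hQ0).trans (P_le_L hv0 hQ0 hvi hbid)

lemma Lclab_nonneg (hM : 1 ≤ M) (hv0 : ∀ x ∈ Set.Icc (0:ℝ) Q, 0 ≤ v x)
    (hvi : IntervalIntegrable v volume 0 Q) (hbid : IsBidPts Q M q b) :
    0 ≤ Lclab Q M hM v q b :=
  le_trans (Wf_nonneg hv0 hvi (q_nonneg hbid le_rfl) hbid.2.2.1) (le_max_right _ _)

end PAB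


section Pick

variable {Q : ℝ} {v : ℝ → ℝ}

/-- one can cut off an arbitrarily small head mass of `v`. -/
lemma exists_small_head (hQ : 0 < Q) (hvi : IntervalIntegrable v volume 0 Q)
    {ε : ℝ} (hε : 0 < ε) :
    ∃ x : ℝ, 0 < x ∧ x ≤ Q ∧ (∫ t in (0:ℝ)..x, v t) ≤ ε := by
  have hc : ContinuousOn (fun x => ∫ t in (0:ℝ)..x, v t) (Set.uIcc 0 Q) :=
    intervalIntegral.continuousOn_primitive_interval' hvi Set.left_mem_uIcc
  have hC : ContinuousWithinAt (fun x => ∫ t in (0:ℝ)..x, v t) (Set.uIcc 0 Q) 0 :=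
    hc 0 Set.left_mem_uIcc
  have hmono : Set.Ioc (0:ℝ) Q ⊆ Set.uIcc 0 Q := by
    rw [Set.uIcc_of_le hQ.le]
    exact Set.Ioc_subset_Icc_self
  have hC' : Filter.Tendsto (fun x => ∫ t in (0:ℝ)..x, v t)
      (nhdsWithin 0 (Set.Ioc (0:ℝ) Q)) (nhds 0) := by
    have h2 := hC.mono_left (nhdsWithin_mono _ hmono)
    simpa [ContinuousWithinAt, intervalIntegral.integral_same] using h2
  have hne : (nhdsWithin (0:ℝ) (Set.Ioc 0 Q)).NeBot := by
    refine mem_closure_iff_nhdsWithin_neBot.mp ?_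
    rw [closure_Ioc hQ.ne]
    exact ⟨le_rfl, hQ.le⟩
  have hev := (hC'.eventually_lt_const hε).and eventually_mem_nhdsWithin
  obtain ⟨x, hx1, hx2⟩ := hev.exists
  exact ⟨x, hx2.1, hx2.2, hx1.le⟩

/-- the threshold point `e` where the tail value drops below level `c`. -/
lemma exists_threshold (hQ : 0 < Q) (hv0 : ∀ x ∈ Set.Icc (0:ℝ) Q, 0 ≤ v x)
    (hvi : IntervalIntegrable v volume 0 Q) {c xlow : ℝ} (hc : 0 < c)
    (hxlow0 : 0 < xlow) (hxlowQ : xlow ≤ Q)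
    (hlow : c < ∫ t in xlow..Q, v t) :
    ∃ e : ℝ, xlow ≤ e ∧ e ≤ Q ∧ (∫ t in e..Q, v t) ≤ c ∧
      ∀ x, 0 ≤ x → x < e → c < ∫ t in x..Q, v t := by
  classical
  set S : Set ℝ := {x | x ∈ Set.Icc (0:ℝ) Q ∧ (∫ t in x..Q, v t) ≤ c} with hS
  have hQS : Q ∈ S := by
    constructor
    · exact ⟨hQ.le, le_rfl⟩
    · simp only [intervalIntegral.integral_same]
      exact hc.le
  have hSb : BddBelow S := ⟨0, fun y hy => hy.1.1⟩
  have hWcont : ContinuousOn (fun x => ∫ t in x..Q, v t) (Set.Icc 0 Q) := by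
    have h_int : IntegrableOn v (Set.uIcc 0 Q) volume := by
      rw [Set.uIcc_of_le hQ.le]
      exact (intervalIntegrable_iff_integrableOn_Icc_of_le hQ.le).mp hvi
    have := intervalIntegral.continuousOn_primitive_interval_left h_int
    rwa [Set.uIcc_of_le hQ.le] at this
  have hclosed : IsClosed S := by
    have : S = Set.Icc (0:ℝ) Q ∩ (fun x => ∫ t in x..Q, v t) ⁻¹' Set.Iic c := rfl
    rw [this]
    exact ContinuousOn.preimage_isClosed_of_isClosed hWcont isClosed_Icc isClosed_Iic
  set e := sInf S with he
  have hemem : e ∈ S := hclosed.csInf_mem ⟨Q, hQS⟩ hSb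
  have helow : xlow ≤ e := by
    refine le_csInf ⟨Q, hQS⟩ fun y hy => ?_
    by_contra hcon
    push_neg at hcon
    have : (∫ t in xlow..Q, v t) ≤ ∫ t in y..Q, v t :=
      Wf_anti hv0 hvi hy.1.1 hcon.le hxlowQ
    have := hy.2
    linarith
  refine ⟨e, helow, hemem.1.2, hemem.2, fun x hx0 hxe => ?_⟩
  by_contra hcon
  push_neg at hcon
  have hxQ : x ≤ Q := le_trans hxe.le hemem.1.2
  have : e ≤ x := csInf_le hSb ⟨⟨hx0, hxQ⟩, hcon⟩
  linarith

end Pick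


end KW

set_option maxHeartbeats 3000000 in
/-- if `v > 0` on `[0,Q)`, minimax loss in the bidpoint-constrained
uniform-price auction is strictly lower than in the bidpoint-constrained pay-as-bid
auction. -/
theorem constrained_minimax_loss_lab_lt_pab
    (Q : ℝ) (hQ : 0 < Q) (M : ℕ) (hM : 1 ≤ M)
    (v : ℝ → ℝ) (hv : IsValueFn Q v) (hvpos : ∀ x ∈ Set.Ico (0:ℝ) Q, 0 < v x) :
    sInf {L : ℝ | ∃ q b, IsBidPts Q M q b ∧ L = Lclab Q M hM v q b} <
      sInf {L : ℝ | ∃ q b, IsBidPts Q M q b ∧ L = Lcpab Q M v q b} := by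
  obtain ⟨hva, hv0, hvi⟩ := hv
  set W0 : ℝ := ∫ x in (0:ℝ)..Q, v x with hW0def
  have hvQ2 : 0 < v (Q/2) := hvpos (Q/2) ⟨by positivity, by linarith⟩
  have hQ2mem : Q/2 ∈ Set.Icc (0:ℝ) Q := ⟨by positivity, by linarith⟩
  have hW0 : 0 < W0 := by
    have h1 : (Q/2 - 0) * v (Q/2) ≤ ∫ x in (0:ℝ)..Q/2, v x := by
      refine KW.const_le_integral_Ico (by positivity) (KW.vII hvi le_rfl (by linarith) (by positivity)) fun x hx => ?_
      exact hva ⟨hx.1, by linarith [hx.2.le]⟩ hQ2mem hx.2.le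
    have h2 : W0 = (∫ x in (0:ℝ)..Q/2, v x) + ∫ x in (Q/2)..Q, v x :=
      KW.Wf_split hvi le_rfl (by positivity) (by linarith)
    have h3 : 0 ≤ ∫ x in (Q/2)..Q, v x := KW.Wf_nonneg hv0 hvi (by positivity) (by linarith)
    have h4 : 0 < (Q/2) * v (Q/2) := mul_pos (by positivity) hvQ2
    rw [sub_zero] at h1
    linarith
  obtain ⟨xs, hxs0, hxsQ, hxsv⟩ := KW.exists_small_head hQ hvi (ε := W0/2) (by positivity)
  set κ := W0/2/(1 + Q/xs) with hkdef
  have hfrac : (1:ℝ) ≤ Q/xs := (one_le_div hxs0).mpr hxsQ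
  have hfrac0 : (0:ℝ) < 1 + Q/xs := by linarith
  have hk0 : 0 < κ := div_pos (by positivity) hfrac0
  have hkW : 4 * κ ≤ W0 := by
    have h1 : κ ≤ W0/2/2 := by
      apply div_le_div_of_nonneg_left (by positivity) (by norm_num) (by linarith)
    linarith
  have hWxs : W0/2 ≤ ∫ x in xs..Q, v x := by
    have h2 : W0 = (∫ x in (0:ℝ)..xs, v x) + ∫ x in xs..Q, v x :=
      KW.Wf_split hvi le_rfl hxs0.le hxsQ
    linarith
  obtain ⟨e, hxse, heQ, hWe, helow⟩ := KW.exists_threshold hQ hv0 hvi (c := κ/8)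
    (by positivity) hxs0 hxsQ (by linarith)
  have he0 : 0 < e := lt_of_lt_of_le hxs0 hxse
  set ν := min (κ/(16*W0)) (1/2) with hndef
  have hn0 : 0 < ν := lt_min (by positivity) (by norm_num)
  have hn2 : ν ≤ 1/2 := min_le_right _ _
  have hn1 : ν ≤ κ/(16*W0) := min_le_left _ _
  set z := (1 - ν)*e with hzdef
  have hz0 : 0 < z := by
    have h1 : (0:ℝ) < 1 - ν := by linarith
    exact mul_pos h1 he0
  have hze : z < e := by nlinarith [mul_pos hn0 he0]
  have hzQ : z ≤ Q := hze.le.trans heQ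
  have hvz0 : 0 ≤ v z := hv0 z ⟨hz0.le, hzQ⟩
  have hvzW : z * v z ≤ W0 := by
    have h1 : (z - 0) * v z ≤ ∫ x in (0:ℝ)..z, v x := by
      refine KW.const_le_integral_Ico hz0.le (KW.vII hvi le_rfl hzQ hz0.le) fun x hx => ?_
      exact hva ⟨hx.1, by linarith [hx.2.le]⟩ ⟨hz0.le, hzQ⟩ hx.2.le
    have h2 : W0 = (∫ x in (0:ℝ)..z, v x) + ∫ x in z..Q, v x :=
      KW.Wf_split hvi le_rfl hz0.le hzQ
    have h3 : 0 ≤ ∫ x in z..Q, v x := KW.Wf_nonneg hv0 hvi hz0.le hzQ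
    rw [sub_zero] at h1
    linarith
  have hWz : (∫ x in z..Q, v x) ≤ κ/4 := by
    have hsplit : (∫ x in z..Q, v x) = (∫ x in z..e, v x) + ∫ x in e..Q, v x :=
      KW.Wf_split hvi hz0.le hze.le heQ
    have hub : (∫ x in z..e, v x) ≤ (e - z) * v z := by
      refine KW.integral_le_const_Ico hze.le (KW.vII hvi hz0.le heQ hze.le) fun x hx => ?_
      exact hva ⟨hz0.le, hzQ⟩ ⟨hz0.le.trans hx.1, hx.2.le.trans heQ⟩ hx.1
    have hez : e - z = ν * e := by rw [hzdef]; ring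
    have hev : e * v z ≤ 2 * W0 := by
      nlinarith [mul_nonneg he0.le hvz0, mul_le_mul_of_nonneg_right hn2 (mul_nonneg he0.le hvz0)]
    have h2 : (e - z) * v z ≤ κ/8 := by
      rw [hez]
      have hνe : ν * e * v z ≤ ν * (2*W0) := by
        rw [mul_assoc]
        exact mul_le_mul_of_nonneg_left hev hn0.le
      have h16 : ν * (16*W0) ≤ κ := (le_div_iff₀ (by positivity)).mp hn1
      have : ν * (2*W0) ≤ κ/8 := by linarith
      linarith
    linarith
  set Δ := ν*e/2 with hDdef
  have hD0 : 0 < Δ := by positivity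
  have hzDe : z + Δ < e := by rw [hzdef, hDdef]; nlinarith [mul_pos hn0 he0]
  set δ₃ := (κ/16)/(1 + Q/Δ) with hd3def
  have hQD0 : 0 < 1 + Q/Δ := by positivity
  have hd30 : 0 < δ₃ := div_pos (by positivity) hQD0
  have hd3eq : δ₃ * (1 + Q/Δ) = κ/16 := div_mul_cancel₀ _ hQD0.ne'
  have hd3k : δ₃ ≤ κ/16 := by
    have h1 : δ₃ * 1 ≤ δ₃ * (1 + Q/Δ) :=
      mul_le_mul_of_nonneg_left (by nlinarith [div_nonneg hQ.le hD0.le] : (1:ℝ) ≤ 1 + Q/Δ) hd30.le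
    rw [mul_one] at h1
    linarith
  set θ := δ₃/(2*Q) with htdef
  have ht0 : 0 < θ := by positivity
  have htQ : Q * θ = δ₃/2 := by rw [htdef]; field_simp
  obtain ⟨lam, hlam0, hlamQ, hlamv⟩ := KW.exists_small_head hQ hvi (ε := κ/4) (by positivity)
  set δ₂ := lam * min θ (κ/(4*Q)) with hd2def
  have hd20 : 0 < δ₂ := mul_pos hlam0 (lt_min ht0 (by positivity))
  set β₀ := κ/(8*Q) with hb0def
  have hb00 : 0 < β₀ := by positivity
  have hQβ₀ : Q * β₀ = κ/8 := by rw [hb0def]; field_simp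
  set c₂ := ∫ x in (0:ℝ)..Q, min (v x) β₀ with hc2def
  have hminII : IntervalIntegrable (fun x => min (v x) β₀) volume 0 Q := KW.II.min_const hvi
  have hminIIh : IntervalIntegrable (fun x => min (v x) β₀) volume 0 (Q/2) := by
    refine hminII.mono_set ?_
    rw [Set.uIcc_of_le (by positivity : (0:ℝ) ≤ Q/2), Set.uIcc_of_le hQ.le]
    exact Set.Icc_subset_Icc le_rfl (by linarith)
  have hminIIt : IntervalIntegrable (fun x => min (v x) β₀) volume (Q/2) Q := by
    refine hminII.mono_set ?_
    rw [Set.uIcc_of_le (by linarith : Q/2 ≤ Q), Set.uIcc_of_le hQ.le]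
    exact Set.Icc_subset_Icc (by positivity) le_rfl
  have hc20 : 0 < c₂ := by
    have h1 : (Q/2 - 0) * min (v (Q/2)) β₀ ≤ ∫ x in (0:ℝ)..Q/2, min (v x) β₀ := by
      refine KW.const_le_integral_Ico (by positivity) hminIIh fun x hx => ?_
      exact min_le_min (hva ⟨hx.1, by linarith [hx.2.le]⟩ hQ2mem hx.2.le) le_rfl
    have h2 : 0 ≤ ∫ x in (Q/2)..Q, min (v x) β₀ := by
      refine KW.integral_nonneg_Ico (by linarith) hminIIt fun x hx => ?_
      exact le_min (hv0 x ⟨by linarith [hx.1], hx.2.le⟩) hb00.le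
    have h3 : c₂ = (∫ x in (0:ℝ)..Q/2, min (v x) β₀) + ∫ x in (Q/2)..Q, min (v x) β₀ :=
      (intervalIntegral.integral_add_adjacent_intervals hminIIh hminIIt).symm
    have h4 : 0 < min (v (Q/2)) β₀ := lt_min hvQ2 hb00
    have h5 : 0 < (Q/2) * min (v (Q/2)) β₀ := mul_pos (by positivity) h4
    rw [sub_zero] at h1
    linarith
  have hc2k : c₂ ≤ κ/8 := by
    have h1 := KW.integral_le_const_Ico hQ.le hminII (fun x _ => min_le_right (v x) β₀)
    rw [sub_zero] at h1
    rw [hc2def]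
    linarith [hQβ₀]
  have hc2W : c₂ ≤ W0 := by
    refine KW.integral_mono_Ico hQ.le hminII hvi fun x hx => min_le_left _ _
  obtain ⟨x₂, hx20, hx2Q, hx2v⟩ := KW.exists_small_head hQ hvi (ε := c₂/4) (by positivity)
  set ρ₁ := x₂*c₂/(8*Q) with hr1def
  have hr10 : 0 < ρ₁ := by positivity
  set δbar := min (min (c₂/2) ρ₁) (min δ₂ (min (δ₃/2) (κ/2))) with hdbardef
  have hdbar0 : 0 < δbar :=
    lt_min (lt_min (by positivity) hr10) (lt_min hd20 (lt_min (by positivity) (by positivity)))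
  have hd1 : δbar ≤ c₂/2 := (min_le_left _ _).trans (min_le_left _ _)
  have hd2 : δbar ≤ ρ₁ := (min_le_left _ _).trans (min_le_right _ _)
  have hd3 : δbar ≤ δ₂ := (min_le_right _ _).trans (min_le_left _ _)
  have hd4 : δbar ≤ δ₃/2 := (min_le_right _ _).trans ((min_le_right _ _).trans (min_le_left _ _))
  have hd5 : δbar ≤ κ/2 := (min_le_right _ _).trans ((min_le_right _ _).trans (min_le_right _ _))
  -- THE KEY PER-BID CONSTRUCTION
  have key : ∀ qf bf, IsBidPts Q M qf bf →
      ∃ qg bg, IsBidPts Q M qg bg ∧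
        Lclab Q M hM v qg bg + δbar ≤ Lcpab Q M v qf bf := by
    intro qf bf hbid
    set L := Lcpab Q M v qf bf with hLdef
    set P := ∫ y in (0:ℝ)..Q, bhat M qf bf y with hPdef
    have hPL : P ≤ L := KW.P_le_L hv0 hQ.le hvi hbid
    have hL0 : 0 ≤ L := KW.L_nonneg hv0 hQ.le hvi hbid
    have hPf0 : (∫ y in (0:ℝ)..(0:ℝ), bhat M qf bf y) = 0 := intervalIntegral.integral_same
    have hheadP : ∀ x : ℝ, 0 ≤ x → x ≤ Q → x * bhat M qf bf x ≤ P := by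
      intro x hx0 hxQ
      have h1 := KW.Pf_band hbid (u := 0) (x := x) le_rfl hx0
      have h2 := KW.Pf_mono hbid (u := x) (x := Q) hx0 hxQ
      rw [hPf0] at h1
      rw [hPdef]
      linarith
    have hkL : κ ≤ L := by
      have h2 := KW.fact_P2 hv0 hvi hbid hxs0.le hxsQ
      have hPfxs : 0 ≤ ∫ y in (0:ℝ)..xs, bhat M qf bf y := KW.Pf_nonneg hbid hxs0.le
      have hbxs : xs * bhat M qf bf xs ≤ L := (hheadP xs hxs0.le hxsQ).trans hPL
      have hbb0 : 0 ≤ bhat M qf bf xs := KW.bhat_nonneg hbid xs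
      have hK : W0/2 ≤ L * (1 + Q/xs) := by
        have h3 : Q * bhat M qf bf xs ≤ (Q/xs) * L := by
          have hxx : Q * bhat M qf bf xs = (Q/xs) * (xs * bhat M qf bf xs) := by
            field_simp
          rw [hxx]
          exact mul_le_mul_of_nonneg_left hbxs (by positivity)
        have hLQ : L * (1 + Q/xs) = L + (Q/xs) * L := by ring
        linarith
      rw [hkdef, div_le_iff₀ hfrac0]
      linarith
    by_cases hcase : P ≤ ρ₁
    · -- CASE 0: tiny payment, use the backstop flat bid
      have hLlb : W0 - c₂/2 ≤ L := by
        have h2 := KW.fact_P2 hv0 hvi hbid hx20.le hx2Q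
        have hPfx2 : 0 ≤ ∫ y in (0:ℝ)..x₂, bhat M qf bf y := KW.Pf_nonneg hbid hx20.le
        have hWx2 : W0 - c₂/4 ≤ ∫ y in x₂..Q, v y := by
          have hs : W0 = (∫ x in (0:ℝ)..x₂, v x) + ∫ x in x₂..Q, v x :=
            KW.Wf_split hvi le_rfl hx20.le hx2Q
          linarith
        have hbx2 : x₂ * bhat M qf bf x₂ ≤ ρ₁ := (hheadP x₂ hx20.le hx2Q).trans hcase
        have hb20 : 0 ≤ bhat M qf bf x₂ := KW.bhat_nonneg hbid x₂
        have hQb : Q * bhat M qf bf x₂ ≤ c₂/8 := by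
          have hxx : Q * bhat M qf bf x₂ = (Q/x₂) * (x₂ * bhat M qf bf x₂) := by
            field_simp
          rw [hxx]
          have h5 : (Q/x₂) * (x₂ * bhat M qf bf x₂) ≤ (Q/x₂) * ρ₁ :=
            mul_le_mul_of_nonneg_left hbx2 (by positivity)
          have h6 : (Q/x₂) * ρ₁ = c₂/8 := by rw [hr1def]; field_simp
          linarith
        linarith
      refine ⟨(fun n => if n = 0 then 0 else Q), (fun _ => β₀), ⟨by simp, ?_, ?_, fun _ _ _ => le_rfl, hb00.le⟩, ?_⟩
      · intro k _
        by_cases hk : k = 0 <;> simp [hk, hQ.le]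
      · have : M ≠ 0 := by omega
        simp [this]
      · -- Lclab of the backstop ≤ L − δbar
        have hgoal : Lclab Q M hM v (fun n => if n = 0 then 0 else Q) (fun _ => β₀)
            ≤ L - δbar := by
          rw [Lclab]
          have hMne : M ≠ 0 := by omega
          refine max_le (Finset.sup'_le _ _ fun k hk => ?_) ?_
          · obtain ⟨hk1, hkM⟩ := Finset.mem_Icc.mp hk
            have hkne : k ≠ 0 := by omega
            refine max_le ?_ ?_
            · -- q̄ k * β₀ = Q * β₀ = κ/8 ≤ L − δbar
              rw [if_neg hkne]
              rw [hQβ₀]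
              linarith
            · by_cases hk1' : k = 1
              · subst hk1'
                simp only [Nat.sub_self, eq_self_iff_true, if_true]
                have hGeq : (∫ x in (0:ℝ)..Q, pos (v x - β₀)) = W0 - c₂ := by
                  have hcong : ∀ x, pos (v x - β₀) = v x - min (v x) β₀ :=
                    fun x => KW.pos_sub_min (v x) β₀
                  have : (∫ x in (0:ℝ)..Q, pos (v x - β₀))
                      = ∫ x in (0:ℝ)..Q, (v x - min (v x) β₀) := by
                    refine intervalIntegral.integral_congr fun x _ => hcong x
                  rw [this, intervalIntegral.integral_sub hvi hminII]
                rw [hGeq]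
                linarith
              · have hkm1 : k - 1 ≠ 0 := by omega
                rw [if_neg hkm1]
                rw [intervalIntegral.integral_same]
                linarith
          · have : M ≠ 0 := by omega
            rw [if_neg this]
            rw [intervalIntegral.integral_same]
            linarith
        linarith
    · -- CASE 1: substantial payment, shrink-and-raise the bid
      push_neg at hcase
      set qg : ℕ → ℝ := fun n => min (qf n) z with hqgdef
      set bg : ℕ → ℝ := fun n => bf n + θ with hbgdef
      have hqg0 : qg 0 = 0 := by
        simp only [hqgdef, hbid.1]
        exact min_eq_left hz0.le
      have hbidg : IsBidPts Q M qg bg := by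
        refine ⟨hqg0, fun k hk => min_le_min (hbid.2.1 k hk) le_rfl,
          (min_le_right _ _).trans hzQ, fun k h1 h2 => ?_, ?_⟩
        · have := hbid.2.2.2.1 k h1 h2
          simp only [hbgdef]
          linarith
        · have := hbid.2.2.2.2
          simp only [hbgdef]
          linarith
      refine ⟨qg, bg, hbidg, ?_⟩
      have hgoal : Lclab Q M hM v qg bg ≤ L - δbar := by
        rw [Lclab]
        refine max_le (Finset.sup'_le _ _ fun k hk => ?_) ?_
        · obtain ⟨hk1, hkM⟩ := Finset.mem_Icc.mp hk
          have hbfk0 : 0 ≤ bf k := KW.b_nonneg hbid hk1 hkM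
          refine max_le ?_ ?_
          · -- the quantity-times-bid term
            set u := min (qf k) z with hudef
            have hu0 : 0 ≤ u := le_min (KW.q_nonneg hbid hkM) hz0.le
            have huq : u ≤ qf k := min_le_left _ _
            have huz : u ≤ z := min_le_right _ _
            have hub : u * bf k ≤ L - δ₃ := by
              by_contra hcon
              push_neg at hcon
              have hPu : u * bf k ≤ ∫ y in (0:ℝ)..u, bhat M qf bf y :=
                KW.Pf_mul_le hbid hk1 hkM hu0 huq
              set x := u + Δ with hxdef
              have hxe : x < e := by rw [hxdef]; linarith
              have hx0 : 0 ≤ x := by rw [hxdef]; linarith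
              have hxQ : x ≤ Q := by linarith [heQ]
              have hWx : κ/8 < ∫ t in x..Q, v t := helow x hx0 hxe
              have hband : Δ * bhat M qf bf x
                  ≤ (∫ y in (0:ℝ)..x, bhat M qf bf y) - ∫ y in (0:ℝ)..u, bhat M qf bf y := by
                have := KW.Pf_band hbid (u := u) (x := x) hu0 (by rw [hxdef]; linarith)
                have hxu : x - u = Δ := by rw [hxdef]; ring
                rwa [hxu] at this
              have hPx : (∫ y in (0:ℝ)..x, bhat M qf bf y) ≤ P := by
                rw [hPdef]
                exact KW.Pf_mono hbid hx0 hxQ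
              have h5 : Δ * bhat M qf bf x < δ₃ := by linarith
              have h6 := KW.fact_P2 hv0 hvi hbid hx0 hxQ
              have hbx0 : 0 ≤ bhat M qf bf x := KW.bhat_nonneg hbid x
              have h7 : Q * bhat M qf bf x ≤ (Q/Δ) * δ₃ := by
                have hxx : Q * bhat M qf bf x = (Q/Δ) * (Δ * bhat M qf bf x) := by
                  field_simp
                rw [hxx]
                exact mul_le_mul_of_nonneg_left h5.le (by positivity)
              have hPfux : (∫ y in (0:ℝ)..u, bhat M qf bf y)
                  ≤ ∫ y in (0:ℝ)..x, bhat M qf bf y :=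
                KW.Pf_mono hbid hu0 (by rw [hxdef]; linarith)
              have hfin : κ/8 < δ₃ * (1 + Q/Δ) := by
                have hring : δ₃ * (1 + Q/Δ) = δ₃ + (Q/Δ) * δ₃ := by ring
                linarith
              rw [hd3eq] at hfin
              linarith
            have huQ : u ≤ Q := huz.trans hzQ
            have hut : u * θ ≤ Q * θ := mul_le_mul_of_nonneg_right huQ ht0.le
            have : qg k * bg k = u * bf k + u * θ := by
              simp only [hqgdef, hbgdef, hudef]
              ring
            rw [this]
            linarith [hub, hut, htQ, hd4]
          · -- the tail-regret term
            rcases le_total (qf (k-1)) z with hle | hgt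
            · have hanchor : qg (k-1) = qf (k-1) := min_eq_left hle
              rw [hanchor]
              have hq0 : 0 ≤ qf (k-1) := KW.q_nonneg hbid (by omega)
              have hqQ : qf (k-1) ≤ Q :=
                (KW.q_mono hbid (k-1) M (by omega) le_rfl).trans hbid.2.2.1
              have hP1 := KW.fact_P1 hv0 hvi hbid hk1 hkM
              have hg := KW.gain hQ hva hv0 hvi hk0 hlam0 hlamQ hlamv ht0 hq0 hqQ hbfk0
              have hbg : bg k = bf k + θ := rfl
              rw [hbg]
              refine le_trans hg (max_le ?_ ?_)
              · linarith
              · rw [hd2def] at hd3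
                linarith
            · have hanchor : qg (k-1) = z := min_eq_right hgt
              rw [hanchor]
              have hbgk0 : 0 ≤ bg k := by
                have : bg k = bf k + θ := rfl
                rw [this]; linarith
              have h1 : (∫ x in z..Q, pos (v x - bg k)) ≤ ∫ x in z..Q, v x :=
                KW.Gf_le_Wf hv0 hvi hz0.le hzQ hbgk0
              linarith
        · -- the uncovered-value term
          rcases le_total (qf M) z with hle | hgt
          · have hanchor : qg M = qf M := min_eq_left hle
            rw [hanchor]
            have hqM0 : 0 ≤ qf M := KW.q_nonneg hbid le_rfl
            have h2 := KW.fact_P2 hv0 hvi hbid hqM0 hbid.2.2.1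
            rw [KW.bhat_zero_of_ge hbid le_rfl] at h2
            have h3 : P = ∫ y in (0:ℝ)..qf M, bhat M qf bf y := KW.P_eq_PqM hbid
            rw [mul_zero, sub_zero, ← h3] at h2
            linarith
          · have hanchor : qg M = z := min_eq_right hgt
            rw [hanchor]
            linarith
      linarith
  -- FINAL ASSEMBLY
  set A := {L : ℝ | ∃ q b, IsBidPts Q M q b ∧ L = Lclab Q M hM v q b} with hAdef
  set B := {L : ℝ | ∃ q b, IsBidPts Q M q b ∧ L = Lcpab Q M v q b} with hBdef
  have hAbdd : BddBelow A := by
    refine ⟨0, ?_⟩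
    rintro L ⟨q', b', hb', rfl⟩
    exact KW.Lclab_nonneg hM hv0 hvi hb'
  have hzero : IsBidPts Q M (fun _ => 0) (fun _ => 0) :=
    ⟨rfl, fun _ _ => le_rfl, hQ.le, fun _ _ _ => le_rfl, le_rfl⟩
  have hBne : B.Nonempty := ⟨Lcpab Q M v (fun _ => 0) (fun _ => 0), (fun _ => 0), (fun _ => 0), hzero, rfl⟩
  have hstep : ∀ LP ∈ B, sInf A + δbar ≤ LP := by
    rintro LP ⟨qf, bf, hbid, rfl⟩
    obtain ⟨qg, bg, hg, hineq⟩ := key qf bf hbid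
    have h1 : sInf A ≤ Lclab Q M hM v qg bg := csInf_le hAbdd ⟨qg, bg, hg, rfl⟩
    linarith
  have hfin : sInf A + δbar ≤ sInf B := le_csInf hBne hstep
  linarith

end
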